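/- Under Assumption A, every copula satisfies the balance property P: for every μ ∈ M(m) and every pair (s',t) ∈ S×S, Σ_{s∈S} (μ(s,t)/m(t))·p(s'|s) = Σ_{t'∈S} (μ(s',t')/m(t'))·p(t'|t). In other words, the set M' of copulas satisfying property P coincides with M(m). -/

import Mathlib

open Finset

/-- `μ` is a probability distribution on `S × S` whose two marginals both equal `m`. -/
def IsCopula {S : Type*} [Fintype S] (m : S → ℝ) (μ : S × S → ℝ) : Prop :=
  (∀ q, 0 ≤ μ q) ∧ (∑ q : S × S, μ q = 1) ∧
    (∀ s, ∑ a, μ (s, a) = m s) ∧ (∀ a, ∑ s, μ (s, a) = m a)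

/- Here `p s s'` denotes the transition probability `p(s' | s)` of moving from `s` to `s'`. -/
theorem stmt6 {S : Type*} [Fintype S] [DecidableEq S] (hS : 1 < Fintype.card S)
    (α : S → ℝ) (hα : ∀ s, 0 < α s)
    (hαsum : ∀ sbar : S, ∑ s ∈ Finset.univ.erase sbar, α s ≤ 1)
    (p : S → S → ℝ)
    (hp : ∀ s s', s ≠ s' → p s s' = α s')
    (hpd : ∀ s, p s s = 1 - ∑ s' ∈ Finset.univ.erase s, α s')
    (C : ℝ) (hC : C = ∑ s, α s)
    (m : S → ℝ) (hm : ∀ s, m s = α s / C)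
    (μ : S × S → ℝ) (hμ : IsCopula m μ) :
    ∀ s' t : S, ∑ s, μ (s, t) / m t * p s s' = ∑ t', μ (s', t') / m t' * p t t' := by
  obtain ⟨hpos, hsum1, hmarg1, hmarg2⟩ := hμ
  haveI : Nonempty S := Fintype.card_pos_iff.mp (by omega)
  have hne : (Finset.univ : Finset S).Nonempty := Finset.univ_nonempty
  have hCpos : 0 < C := by
    rw [hC]; exact Finset.sum_pos (fun s _ => hα s) hne
  have hmpos : ∀ s, 0 < m s := fun s => by rw [hm]; exact div_pos (hα s) hCpos
  have hpform : ∀ s s', p s s' = α s' + (1 - C) * (if s' = s then 1 else 0) := by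
    intro s s'
    by_cases h : s' = s
    · subst h
      rw [hpd]
      have he : ∑ x ∈ Finset.univ.erase s', α x = C - α s' := by
        have := Finset.sum_erase_add Finset.univ α (Finset.mem_univ s')
        rw [hC]; linarith
      rw [he]; simp; ring
    · rw [hp s s' (fun e => h e.symm)]; simp [h]
  intro s' t
  have hmt := (hmpos t).ne'
  have L : ∑ s, μ (s, t) / m t * p s s' = α s' + (1 - C) * (μ (s', t) / m t) := by
    have step : ∀ s : S, μ (s, t) / m t * p s s'
        = μ (s, t) * ((m t)⁻¹ * α s')
          + (1 - C) * (μ (s', t) / m t) * (if s' = s then 1 else 0) := by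
      intro s
      rw [hpform]
      by_cases h : s' = s
      · subst h; rw [if_pos rfl]; ring
      · rw [if_neg h]; ring
    rw [Finset.sum_congr rfl (fun s _ => step s), Finset.sum_add_distrib,
      ← Finset.sum_mul, hmarg2]
    simp only [mul_ite, mul_one, mul_zero, Finset.sum_ite_eq, Finset.mem_univ, if_true]
    rw [← mul_assoc, mul_inv_cancel₀ hmt, one_mul]
  have R : ∑ t', μ (s', t') / m t' * p t t' = α s' + (1 - C) * (μ (s', t) / m t) := by
    have step : ∀ t' : S, μ (s', t') / m t' * p t t'
        = μ (s', t') * C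
          + (1 - C) * (μ (s', t) / m t) * (if t' = t then 1 else 0) := by
      intro t'
      rw [hpform]
      have hmt' := (hmpos t').ne'
      have hα' : α t' = m t' * C := by
        rw [hm]; field_simp
      by_cases h : t' = t
      · subst h; rw [if_pos rfl, hα']; field_simp
      · rw [if_neg h, hα']; field_simp; ring
    rw [Finset.sum_congr rfl (fun t' _ => step t'), Finset.sum_add_distrib,
      ← Finset.sum_mul, hmarg1]
    simp only [mul_ite, mul_one, mul_zero, Finset.sum_ite_eq', Finset.mem_univ, if_true]
    rw [hm, div_mul_cancel₀ _ hCpos.ne']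
  rw [L, R]
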